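/- Let k be an algebraically closed field of characteristic 0, let a ∈ kˣ not be a root of unity, let c ∈ k with c ≠ 0, let P ∈ k[y], and let φ be the k-algebra automorphism of k[x,y] with φ(x) = a x + P(y) and φ(y) = y + c, with associated point map φ̂. Then there exists a polynomial h ∈ k[y] such that φ(x − h(y)) = a·(x − h(y)), and the curve C = {(x,y) ∈ k² : x = h(y)} is the unique Zariski-closed subset S ⊆ k² with φ̂(S) = S other than ∅ and k². In particular, the lattice of φ̂-invariant Zariski-closed subsets of k² consists of exactly three elements: ∅, the curve C (which is isomorphic to A¹), and k². -/

import Mathlib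

open MvPolynomial

lemma rootsInf {k : Type*} [Field k] [CharZero k] (g : Polynomial k) (v0 c : k) (hc : c ≠ 0)
    (h : ∀ n : ℕ, g.eval (v0 + n * c) = 0) : g = 0 := by
  apply Polynomial.eq_zero_of_infinite_isRoot
  apply Set.infinite_of_injective_forall_mem (f := fun n : ℕ => v0 + n * c)
  · intro m n hmn
    simp only [add_right_inj] at hmn
    have := mul_right_cancel₀ hc hmn
    exact_mod_cast this
  · intro n; exact h n

lemma taylorLead' {k : Type*} [Field k] (r : k) (p : Polynomial k) :
    (Polynomial.taylor r p).leadingCoeff = p.leadingCoeff := by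
  rw [Polynomial.taylor_apply, Polynomial.leadingCoeff_comp]
  · rw [Polynomial.leadingCoeff_X_add_C, one_pow, mul_one]
  · rw [Polynomial.natDegree_X_add_C]; exact one_ne_zero

lemma taylorLead {k : Type*} [Field k] (p : Polynomial k) :
    (Polynomial.taylor 1 p).leadingCoeff = p.leadingCoeff := by
  rw [Polynomial.taylor_apply, Polynomial.leadingCoeff_comp]
  · rw [Polynomial.leadingCoeff_X_add_C, one_pow, mul_one]
  · rw [Polynomial.natDegree_X_add_C]; exact one_ne_zero

lemma expPoly {k : Type*} [Field k] [CharZero k] (a : k) (ha0 : a ≠ 0)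
    (ha : ∀ m : ℕ, 0 < m → a ^ m ≠ 1) :
    ∀ M : ℕ, ∀ q : ℕ → Polynomial k,
      (∀ n : ℕ, ∑ i ∈ Finset.range (M + 1), a ^ (n * i) * (q i).eval (n : k) = 0) →
      ∀ i ≤ M, q i = 0 := by
  intro M
  induction M using Nat.strong_induction_on with
  | _ M ihM =>
  suffices key : ∀ d : ℕ, ∀ q : ℕ → Polynomial k, (q M).natDegree ≤ d →
      (∀ n : ℕ, ∑ i ∈ Finset.range (M + 1), a ^ (n * i) * (q i).eval (n : k) = 0) →
      ∀ i ≤ M, q i = 0 by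
    exact fun q hq => key _ q le_rfl hq
  intro d
  induction d using Nat.strong_induction_on with
  | _ d ihd =>
  intro q hdeg hq
  set q' : ℕ → Polynomial k :=
    fun i => Polynomial.C (a ^ i) * Polynomial.taylor 1 (q i) - Polynomial.C (a ^ M) * q i
    with hq'def
  have hq' : ∀ n : ℕ, ∑ i ∈ Finset.range (M + 1), a ^ (n * i) * (q' i).eval (n : k) = 0 := by
    intro n
    have h1 := hq (n + 1)
    have h2 := hq n
    calc ∑ i ∈ Finset.range (M + 1), a ^ (n * i) * (q' i).eval (n : k)
        = ∑ i ∈ Finset.range (M + 1),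
            (a ^ ((n+1) * i) * (q i).eval ((n+1 : ℕ) : k)
              - a ^ M * (a ^ (n * i) * (q i).eval (n : k))) := by
          apply Finset.sum_congr rfl
          intro i _
          simp only [hq'def, Polynomial.eval_sub, Polynomial.eval_mul, Polynomial.eval_C,
            Polynomial.taylor_eval]
          push_cast
          ring
      _ = 0 := by
          rw [Finset.sum_sub_distrib, ← Finset.mul_sum, h2, h1, mul_zero, sub_zero]
  have hq'M : q' M = 0 := by
    rcases Nat.eq_zero_or_pos (q M).natDegree with h0 | hpos
    · obtain ⟨γ, hγ⟩ := Polynomial.natDegree_eq_zero.mp h0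
      simp [hq'def, ← hγ, Polynomial.taylor_C]
    · -- degree drop
      have hne : q M ≠ 0 := fun h => by simp [h] at hpos
      have hlt : (q' M).natDegree < d := by
        have hfac : q' M = Polynomial.C (a ^ M) * (Polynomial.taylor 1 (q M) - q M) := by
          rw [hq'def]; ring
        rcases eq_or_ne (Polynomial.taylor 1 (q M) - q M) 0 with hz | hz
        · rw [hfac, hz, mul_zero, Polynomial.natDegree_zero]
          exact lt_of_lt_of_le hpos hdeg
        · have hnd := Polynomial.natDegree_taylor (q M) (1 : k)
          have htne : Polynomial.taylor 1 (q M) ≠ 0 := by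
            intro h
            rw [h, Polynomial.natDegree_zero] at hnd
            omega
          have hdeg_eq : (Polynomial.taylor 1 (q M)).degree = (q M).degree := by
            rw [Polynomial.degree_eq_natDegree htne, Polynomial.degree_eq_natDegree hne, hnd]
          have hdlt : (Polynomial.taylor 1 (q M) - q M).degree < (q M).degree := by
            rw [← hdeg_eq]
            exact Polynomial.degree_sub_lt hdeg_eq htne (taylorLead (q M))
          have := Polynomial.natDegree_lt_natDegree hz hdlt
          rw [hfac, Polynomial.natDegree_C_mul (pow_ne_zero _ ha0)]
          omega
      exact ihd _ hlt q' le_rfl hq' M le_rfl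
  -- now the main reduction
  have hqlow : ∀ i < M, q i = 0 := by
    rcases Nat.eq_zero_or_pos M with hM0 | hMpos
    · intro i hi; omega
    · have hsum' : ∀ n : ℕ, ∑ i ∈ Finset.range (M - 1 + 1), a ^ (n * i) * (q' i).eval (n : k) = 0 := by
        intro n
        have := hq' n
        rw [Finset.sum_range_succ, hq'M] at this
        simpa [Nat.sub_add_cancel hMpos] using this
      have hz' : ∀ i ≤ M - 1, q' i = 0 := ihM (M - 1) (by omega) q' hsum'
      intro i hi
      have hqi' : q' i = 0 := hz' i (by omega)
      by_contra hne
      have heq : Polynomial.C (a ^ i) * Polynomial.taylor 1 (q i) = Polynomial.C (a ^ M) * q i :=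
        sub_eq_zero.mp hqi'
      have hlead := congrArg Polynomial.leadingCoeff heq
      rw [Polynomial.leadingCoeff_mul, Polynomial.leadingCoeff_mul, Polynomial.leadingCoeff_C,
        Polynomial.leadingCoeff_C, taylorLead] at hlead
      have hlc : (q i).leadingCoeff ≠ 0 := Polynomial.leadingCoeff_ne_zero.mpr hne
      have : a ^ i = a ^ M := mul_right_cancel₀ hlc hlead
      have hpow : a ^ (M - i) = 1 := by
        have hMi : a ^ i * a ^ (M - i) = a ^ i * 1 := by
          rw [mul_one, ← pow_add]
          rw [this]
          congr 1
          omega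
        exact mul_left_cancel₀ (pow_ne_zero _ ha0) hMi
      exact ha (M - i) (by omega) hpow
  have hqM : q M = 0 := by
    apply rootsInf (q M) 0 1 one_ne_zero
    intro n
    have := hq n
    rw [Finset.sum_range_succ] at this
    have hv : ∑ i ∈ Finset.range M, a ^ (n * i) * (q i).eval (n : k) = 0 := by
      apply Finset.sum_eq_zero
      intro i hi
      rw [hqlow i (Finset.mem_range.mp hi), Polynomial.eval_zero, mul_zero]
    rw [hv, zero_add] at this
    have := mul_eq_zero.mp this
    rcases this with h | h
    · exact absurd h (pow_ne_zero _ ha0)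
    · simpa using h
  intro i hi
  rcases lt_or_eq_of_le hi with h | h
  · exact hqlow i h
  · rw [h]; exact hqM

open MvPolynomial

noncomputable def Phi (k : Type*) [Field k] :
    MvPolynomial (Fin 2) k ≃ₐ[k] Polynomial (Polynomial k) :=
  (MvPolynomial.finSuccEquiv k 1).trans
    (Polynomial.mapAlgEquiv
      ((MvPolynomial.finSuccEquiv k 0).trans
        (Polynomial.mapAlgEquiv (MvPolynomial.isEmptyAlgEquiv k (Fin 0)))))

lemma Phi_X0 {k : Type*} [Field k] : Phi k (X 0) = Polynomial.X := by
  simp [Phi, MvPolynomial.finSuccEquiv_X_zero]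

lemma Phi_X1 {k : Type*} [Field k] : Phi k (X 1) = Polynomial.C Polynomial.X := by
  have : (X 1 : MvPolynomial (Fin 2) k) = X (Fin.succ 0) := rfl
  rw [Phi, AlgEquiv.trans_apply, this, MvPolynomial.finSuccEquiv_X_succ]
  simp [MvPolynomial.finSuccEquiv_X_zero]

lemma Phi_eval {k : Type*} [Field k] (s t : k) (G : MvPolynomial (Fin 2) k) :
    eval ![s, t] G = Polynomial.eval s ((Phi k G).map (Polynomial.evalRingHom t)) := by
  have : (MvPolynomial.aeval ![s, t] : MvPolynomial (Fin 2) k →ₐ[k] k)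
      = ((Polynomial.aeval s : Polynomial k →ₐ[k] k).comp
          ((Polynomial.mapAlgHom (Polynomial.aeval t : Polynomial k →ₐ[k] k)).comp
            (Phi k).toAlgHom)) := by
    apply MvPolynomial.algHom_ext
    intro i
    fin_cases i
    · show (MvPolynomial.aeval ![s, t]) (X 0) = _
      simp [Phi_X0]
    · show (MvPolynomial.aeval ![s, t]) (X 1) = _
      simp [Phi_X1]
  have h2 := congrArg (fun (F : MvPolynomial (Fin 2) k →ₐ[k] k) => F G) this
  simp only [AlgHom.coe_comp, Function.comp_apply, Polynomial.coe_mapAlgHom,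
    AlgEquiv.toAlgHom_eq_coe, AlgHom.coe_coe] at h2
  rw [← MvPolynomial.coe_aeval_eq_eval]
  show (MvPolynomial.aeval ![s,t]) G = _
  rw [h2, Polynomial.coe_aeval_eq_eval, ← Polynomial.coe_aeval_eq_evalRingHom]
  rfl

lemma orbitClosure {k : Type*} [Field k] [CharZero k] (a : k) (ha0 : a ≠ 0)
    (ha : ∀ m : ℕ, 0 < m → a ^ m ≠ 1) (G : MvPolynomial (Fin 2) k)
    (hG : ∀ n : ℕ, eval ![a ^ n, (n : k)] G = 0) : G = 0 := by
  set F : Polynomial (Polynomial k) := Phi k G with hF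
  set M := F.natDegree with hM
  have hyp : ∀ n : ℕ, ∑ i ∈ Finset.range (M + 1), a ^ (n * i) * (F.coeff i).eval (n : k) = 0 := by
    intro n
    have h1 := hG n
    rw [Phi_eval, ← hF] at h1
    rw [Polynomial.eval_eq_sum_range' (n := M + 1)
      (lt_of_le_of_lt Polynomial.natDegree_map_le (Nat.lt_succ_of_le le_rfl))] at h1
    rw [← h1]
    apply Finset.sum_congr rfl
    intro i _
    rw [Polynomial.coeff_map]
    simp only [Polynomial.coe_evalRingHom]
    rw [← pow_mul, mul_comm n i]
    ring
  have hq0 : ∀ i ≤ M, F.coeff i = 0 := expPoly a ha0 ha M (fun i => F.coeff i) hyp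
  have hF0 : F = 0 := by
    ext i
    rcases le_or_gt i M with h | h
    · rw [hq0 i h]; simp
    · rw [Polynomial.coeff_eq_zero_of_natDegree_lt h]; simp
  exact (Phi k).injective (by rw [← hF, hF0, map_zero])

lemma solveH {k : Type*} [Field k] (a c : k) (ha1 : a ≠ 1) :
    ∀ d : ℕ, ∀ P : Polynomial k, P.natDegree ≤ d →
      ∃ h : Polynomial k, Polynomial.taylor c h - Polynomial.C a * h = P := by
  intro d
  induction d using Nat.strong_induction_on with
  | _ d ihd =>
  intro P hP
  by_cases hP0 : P = 0
  · exact ⟨0, by simp [hP0]⟩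
  have h1a : (1 : k) - a ≠ 0 := sub_ne_zero.mpr (Ne.symm ha1)
  set n := P.natDegree with hn
  set b : k := (1 - a)⁻¹ * P.leadingCoeff with hb
  have hbne : b ≠ 0 := mul_ne_zero (inv_ne_zero h1a) (Polynomial.leadingCoeff_ne_zero.mpr hP0)
  set h₀ : Polynomial k := Polynomial.C b * Polynomial.X ^ n with hh0
  have hdeg0 : h₀.natDegree = n := by
    rw [hh0, Polynomial.natDegree_C_mul hbne, Polynomial.natDegree_X_pow]
  have hlc0 : h₀.leadingCoeff = b := by
    rw [hh0, Polynomial.leadingCoeff_mul, Polynomial.leadingCoeff_C,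
      Polynomial.leadingCoeff_X_pow, mul_one]
  have hh0ne : h₀ ≠ 0 := by
    intro h
    rw [h, Polynomial.leadingCoeff_zero] at hlc0
    exact hbne hlc0.symm
  set L₀ : Polynomial k := Polynomial.taylor c h₀ - Polynomial.C a * h₀ with hL0
  have hcoeffn : L₀.coeff n = P.leadingCoeff := by
    have h1 : (Polynomial.taylor c h₀).coeff n = b := by
      have := Polynomial.natDegree_taylor h₀ c
      rw [hdeg0] at this
      have hl := taylorLead' c h₀
      rw [hlc0] at hl
      rw [← this, ← Polynomial.leadingCoeff, hl]
    rw [hL0, Polynomial.coeff_sub, h1, Polynomial.coeff_C_mul, ← hdeg0,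
      ← Polynomial.leadingCoeff, hlc0, hb]
    field_simp
  have hdegL : L₀.natDegree ≤ n := by
    apply le_trans (Polynomial.natDegree_sub_le _ _)
    apply max_le
    · rw [Polynomial.natDegree_taylor, hdeg0]
    · apply le_trans (Polynomial.natDegree_mul_le)
      simp [hdeg0]
  set R := P - L₀ with hR
  have hRcoeff : R.coeff n = 0 := by
    rw [hR, Polynomial.coeff_sub, hcoeffn, Polynomial.leadingCoeff, ← hn, sub_self]
  have hRdeg : R.natDegree ≤ n := by
    apply le_trans (Polynomial.natDegree_sub_le _ _)
    exact max_le (le_of_eq hn.symm) hdegL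

  by_cases hR0 : R = 0
  · exact ⟨h₀, (sub_eq_zero.mp hR0).symm⟩
  · have hRlt : R.natDegree < n := by
      rcases lt_or_eq_of_le hRdeg with h | h
      · exact h
      · exfalso
        have := Polynomial.leadingCoeff_ne_zero.mpr hR0
        rw [Polynomial.leadingCoeff, h, hRcoeff] at this
        exact this rfl
    have hnd : n ≤ d := hP
    obtain ⟨h₁, hh₁⟩ := ihd R.natDegree (lt_of_lt_of_le hRlt hnd) R le_rfl
    refine ⟨h₀ + h₁, ?_⟩
    rw [map_add, mul_add]
    have : Polynomial.taylor c h₀ + Polynomial.taylor c h₁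
        - (Polynomial.C a * h₀ + Polynomial.C a * h₁) = L₀ + (Polynomial.taylor c h₁ - Polynomial.C a * h₁) := by
      rw [hL0]; ring
    rw [this, hh₁, hR]
    ring

lemma aeval_eq_eval'' {k : Type*} [Field k] {n : ℕ} (x : Fin n → k) (f : MvPolynomial (Fin n) k) :
    MvPolynomial.aeval x f = eval x f := by
  rw [MvPolynomial.aeval_def, Algebra.algebraMap_self]
  rfl

lemma eval_mv_aeval {k : Type*} [Field k] (x : Fin 2 → k) (g : Fin 2 → MvPolynomial (Fin 2) k)
    (f : MvPolynomial (Fin 2) k) :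
    eval x (MvPolynomial.aeval g f) = eval (fun i => eval x (g i)) f := by
  have : ((MvPolynomial.aeval x : MvPolynomial (Fin 2) k →ₐ[k] k).comp (MvPolynomial.aeval g))
      = MvPolynomial.aeval (fun i => eval x (g i)) := by
    apply MvPolynomial.algHom_ext
    intro i
    simp [aeval_eq_eval'']
  have h2 := congrArg (fun (F : MvPolynomial (Fin 2) k →ₐ[k] k) => F f) this
  simp only [AlgHom.coe_comp, Function.comp_apply] at h2
  rw [← aeval_eq_eval'', ← aeval_eq_eval'' (fun i => eval x (g i))]
  exact h2

lemma eval_pol_aeval {k : Type*} [Field k] (x : Fin 2 → k) (w : MvPolynomial (Fin 2) k)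
    (g : Polynomial k) :
    eval x (Polynomial.aeval w g) = Polynomial.eval (eval x w) g := by
  have := Polynomial.aeval_algHom_apply (MvPolynomial.aeval x : MvPolynomial (Fin 2) k →ₐ[k] k) w g
  rw [aeval_eq_eval'', aeval_eq_eval''] at this
  rw [← this, Polynomial.coe_aeval_eq_eval]

lemma eval_mv_aeval_pol {k : Type*} [Field k] (v : k) (g : Fin 2 → Polynomial k)
    (f : MvPolynomial (Fin 2) k) :
    Polynomial.eval v (MvPolynomial.aeval g f) = eval (fun i => Polynomial.eval v (g i)) f := by
  have : ((Polynomial.aeval v : Polynomial k →ₐ[k] k).comp (MvPolynomial.aeval g))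
      = MvPolynomial.aeval (fun i => Polynomial.eval v (g i)) := by
    apply MvPolynomial.algHom_ext
    intro i
    simp [Polynomial.coe_aeval_eq_eval]
  have h2 := congrArg (fun (F : MvPolynomial (Fin 2) k →ₐ[k] k) => F f) this
  simp only [AlgHom.coe_comp, Function.comp_apply] at h2
  rw [← Polynomial.coe_aeval_eq_eval]
  show (Polynomial.aeval v) ((MvPolynomial.aeval g) f) = _
  rw [h2, aeval_eq_eval'']
  rfl



/-- A subset of the plane is Zariski closed if it is the common zero locus of an ideal of
polynomials. -/
def IsZariskiClosed {k : Type*} [Field k] (S : Set (Fin 2 → k)) : Prop :=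
  ∃ I : Ideal (MvPolynomial (Fin 2) k), S = {p | ∀ f ∈ I, eval p f = 0}

/-- The point map associated with a `k`-algebra automorphism `σ` of `k[x,y]`:
`σ̂ p = ((σ x)(p), (σ y)(p))`. -/
noncomputable def pmap {k : Type*} [Field k]
    (σ : MvPolynomial (Fin 2) k ≃ₐ[k] MvPolynomial (Fin 2) k)
    (p : Fin 2 → k) : Fin 2 → k :=
  fun i => eval p (σ (X i))

theorem stmt18 {k : Type*} [Field k] [IsAlgClosed k] [CharZero k]
    (a : kˣ) (ha : ∀ m : ℕ, 0 < m → a ^ m ≠ 1)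
    (c : k) (hc : c ≠ 0) (P : Polynomial k)
    (φ : MvPolynomial (Fin 2) k ≃ₐ[k] MvPolynomial (Fin 2) k)
    (hφx : φ (X 0) = C (a : k) * X 0 + Polynomial.aeval (X 1) P)
    (hφy : φ (X 1) = X 1 + C c) :
    ∃ h : Polynomial k,
      φ (X 0 - Polynomial.aeval (X 1) h) = C (a : k) * (X 0 - Polynomial.aeval (X 1) h) ∧
      IsZariskiClosed {p : Fin 2 → k | p 0 = Polynomial.eval (p 1) h} ∧
      pmap φ '' {p : Fin 2 → k | p 0 = Polynomial.eval (p 1) h} =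
        {p : Fin 2 → k | p 0 = Polynomial.eval (p 1) h} ∧
      ({p : Fin 2 → k | p 0 = Polynomial.eval (p 1) h} : Set (Fin 2 → k)) ≠ ∅ ∧
      {p : Fin 2 → k | p 0 = Polynomial.eval (p 1) h} ≠ Set.univ ∧
      ∀ S : Set (Fin 2 → k), IsZariskiClosed S → pmap φ '' S = S →
        S = ∅ ∨ S = {p : Fin 2 → k | p 0 = Polynomial.eval (p 1) h} ∨ S = Set.univ := by
  -- basic facts about a
  have ha0 : (a : k) ≠ 0 := a.ne_zero
  have ha' : ∀ m : ℕ, 0 < m → (a : k) ^ m ≠ 1 := by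
    intro m hm hone
    exact ha m hm (Units.ext (by push_cast; exact hone))
  have ha1 : (a : k) ≠ 1 := by
    intro h1
    exact ha' 1 one_pos (by rw [pow_one]; exact h1)
  -- get h
  obtain ⟨h, Hh⟩ := solveH (a : k) c ha1 P.natDegree P le_rfl
  -- the functional equation, evaluated
  have hfe : ∀ v : k, Polynomial.eval (v + c) h
      = (a : k) * Polynomial.eval v h + Polynomial.eval v P := by
    intro v
    have := congrArg (Polynomial.eval v) Hh
    rw [Polynomial.eval_sub, Polynomial.eval_mul, Polynomial.eval_C, Polynomial.taylor_eval] at this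
    linear_combination this
  -- the polynomial identity φ (X 0 - h(X 1)) = a (X 0 - h(X 1))
  have hmain : φ (X 0 - Polynomial.aeval (X 1) h)
      = C (a : k) * (X 0 - Polynomial.aeval (X 1) h) := by
    have h1 : φ (Polynomial.aeval (X 1 : MvPolynomial (Fin 2) k) h)
        = Polynomial.aeval (X 1 + C c : MvPolynomial (Fin 2) k) h := by
      rw [← Polynomial.aeval_algHom_apply, hφy]
    have h2 : Polynomial.aeval (X 1 + C c : MvPolynomial (Fin 2) k) h
        = Polynomial.aeval (X 1 : MvPolynomial (Fin 2) k) (Polynomial.taylor c h) := by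
      rw [Polynomial.taylor_apply, Polynomial.aeval_comp]
      simp
    have h3 : Polynomial.taylor c h = P + Polynomial.C (a : k) * h := by
      rw [← Hh]; ring
    rw [map_sub, hφx, h1, h2, h3, map_add, map_mul]
    simp only [Polynomial.aeval_C]
    rw [show (algebraMap k (MvPolynomial (Fin 2) k)) (a : k) = C (a : k) from rfl]
    ring
  -- evaluation of aeval (X 1) h at a point
  have hev : ∀ (p : Fin 2 → k) (g : Polynomial k),
      eval p (Polynomial.aeval (X 1 : MvPolynomial (Fin 2) k) g) = Polynomial.eval (p 1) g := by
    intro p g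
    rw [eval_pol_aeval]
    simp
  -- pmap formulas
  have hp0 : ∀ p : Fin 2 → k, pmap φ p 0 = (a : k) * p 0 + Polynomial.eval (p 1) P := by
    intro p
    show eval p (φ (X 0)) = _
    rw [hφx]
    simp [hev p P]
  have hp1 : ∀ p : Fin 2 → k, pmap φ p 1 = p 1 + c := by
    intro p
    show eval p (φ (X 1)) = _
    rw [hφy]
    simp
  refine ⟨h, hmain, ?_, ?_, ?_, ?_, ?_⟩
  · -- Zariski closed
    refine ⟨Ideal.span {X 0 - Polynomial.aeval (X 1) h}, ?_⟩
    ext p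
    simp only [Set.mem_setOf_eq]
    constructor
    · intro hp f hf
      obtain ⟨q, hq⟩ := Ideal.mem_span_singleton'.mp hf
      rw [← hq, map_mul]
      have : eval p (X 0 - Polynomial.aeval (X 1) h) = 0 := by
        rw [map_sub, hev, eval_X, hp, sub_self]
      rw [this, mul_zero]
    · intro hp
      have := hp _ (Ideal.subset_span (Set.mem_singleton _))
      rw [map_sub, hev, eval_X] at this
      exact sub_eq_zero.mp this
  · -- image of the curve
    apply Set.eq_of_subset_of_subset
    · rintro q ⟨p, hp, rfl⟩
      simp only [Set.mem_setOf_eq] at hp ⊢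
      rw [hp0, hp1, hp, hfe (p 1)]
    · intro q hq
      simp only [Set.mem_setOf_eq] at hq
      set p : Fin 2 → k := ![(a : k)⁻¹ * (q 0 - Polynomial.eval (q 1 - c) P), q 1 - c] with hpdef
      have hp0' : p 0 = (a : k)⁻¹ * (q 0 - Polynomial.eval (q 1 - c) P) := rfl
      have hp1' : p 1 = q 1 - c := rfl
      have heq := hfe (q 1 - c)
      rw [sub_add_cancel] at heq
      have hph : p 0 = Polynomial.eval (p 1) h := by
        rw [hp0', hp1', hq, heq]
        field_simp
        ring
      refine ⟨p, hph, ?_⟩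
      funext i
      fin_cases i
      · show pmap φ p 0 = q 0
        rw [hp0 p, hp0', hp1']
        field_simp
        ring
      · show pmap φ p 1 = q 1
        rw [hp1 p, hp1']
        ring
  · -- nonempty
    intro hS
    have : (![Polynomial.eval 0 h, 0] : Fin 2 → k) ∈
        {p : Fin 2 → k | p 0 = Polynomial.eval (p 1) h} := by
      simp
    rw [hS] at this
    exact this
  · -- not univ
    intro hS
    have : (![Polynomial.eval 0 h + 1, 0] : Fin 2 → k) ∈
        {p : Fin 2 → k | p 0 = Polynomial.eval (p 1) h} := by
      rw [hS]; trivial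
    simp only [Set.mem_setOf_eq] at this
    simp at this
  · -- main classification
    rintro S ⟨I, hI⟩ himg
    have hstep : ∀ p ∈ S, pmap φ p ∈ S := fun p hp => himg ▸ Set.mem_image_of_mem _ hp
    have horbit : ∀ p ∈ S, ∀ n : ℕ,
        (![(a:k)^n * (p 0 - Polynomial.eval (p 1) h) + Polynomial.eval (p 1 + n*c) h,
          p 1 + n*c] : Fin 2 → k) ∈ S := by
      intro p hp n
      induction n with
      | zero =>
        have hvec : (![(a:k)^0 * (p 0 - Polynomial.eval (p 1) h)
            + Polynomial.eval (p 1 + (0:ℕ)*c) h, p 1 + (0:ℕ)*c] : Fin 2 → k) = p := by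
          funext i
          fin_cases i <;> simp
        rw [hvec]
        exact hp
      | succ n ih =>
        have hv : pmap φ (![(a:k)^n * (p 0 - Polynomial.eval (p 1) h)
              + Polynomial.eval (p 1 + n*c) h, p 1 + n*c] : Fin 2 → k)
            = (![(a:k)^(n+1) * (p 0 - Polynomial.eval (p 1) h)
              + Polynomial.eval (p 1 + (n+1 : ℕ)*c) h, p 1 + (n+1 : ℕ)*c] : Fin 2 → k) := by
          funext i
          fin_cases i
          · show pmap φ _ 0 = (a:k)^(n+1) * (p 0 - Polynomial.eval (p 1) h)
                + Polynomial.eval (p 1 + ((n+1 : ℕ) : k)*c) h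
            rw [hp0]
            simp only [Matrix.cons_val_zero, Matrix.cons_val_one, Matrix.head_cons]
            have harg : p 1 + ((n+1 : ℕ) : k)*c = (p 1 + (n:k)*c) + c := by push_cast; ring
            rw [harg, hfe (p 1 + (n:k)*c)]
            ring
          · show pmap φ _ 1 = p 1 + ((n+1 : ℕ) : k)*c
            rw [hp1]
            simp only [Matrix.cons_val_one, Matrix.head_cons]
            push_cast
            ring
        rw [← hv]
        exact hstep _ ih
    by_cases hsub : ∀ p ∈ S, p 0 = Polynomial.eval (p 1) h
    · by_cases hemp : S = ∅
      · left; exact hemp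
      · right; left
        obtain ⟨p, hp⟩ := Set.nonempty_iff_ne_empty.mpr hemp
        apply Set.eq_of_subset_of_subset
        · intro q hq
          exact hsub q hq
        · intro q hq
          simp only [Set.mem_setOf_eq] at hq
          rw [hI]
          intro f hf
          have hgv : ∀ v : k, Polynomial.eval v (MvPolynomial.aeval ![h, Polynomial.X] f)
              = eval ![Polynomial.eval v h, v] f := by
            intro v
            rw [eval_mv_aeval_pol]
            have hfn : (fun i => Polynomial.eval v ((![h, Polynomial.X] : Fin 2 → Polynomial k) i))
                = ![Polynomial.eval v h, v] := by
              funext i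
              fin_cases i <;> simp
            rw [hfn]
          have hg0 : MvPolynomial.aeval ![h, Polynomial.X] f = 0 := by
            apply rootsInf _ (p 1) c hc
            intro n
            rw [hgv]
            have hmem := horbit p hp n
            have hu0 : p 0 - Polynomial.eval (p 1) h = 0 := by rw [hsub p hp]; ring
            have hveq : (![(a:k)^n * (p 0 - Polynomial.eval (p 1) h)
                + Polynomial.eval (p 1 + n*c) h, p 1 + n*c] : Fin 2 → k)
                = ![Polynomial.eval (p 1 + n*c) h, p 1 + n*c] := by
              rw [hu0]
              funext i
              fin_cases i <;> simp
            rw [hveq, hI] at hmem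
            exact hmem f hf
          have hqv : q = ![Polynomial.eval (q 1) h, q 1] := by
            funext i
            fin_cases i
            · exact hq
            · rfl
          conv_lhs => rw [hqv]
          rw [← hgv (q 1), hg0, Polynomial.eval_zero]
    · right; right
      push_neg at hsub
      obtain ⟨p, hp, hne⟩ := hsub
      have hu0 : p 0 - Polynomial.eval (p 1) h ≠ 0 := sub_ne_zero.mpr hne
      have hzero : ∀ f ∈ I, f = 0 := by
        intro f hf
        set u0 : k := p 0 - Polynomial.eval (p 1) h with hu0def
        set v0 : k := p 1 with hv0def
        set A : MvPolynomial (Fin 2) k →ₐ[k] MvPolynomial (Fin 2) k :=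
          MvPolynomial.aeval ![C u0 * X 0 + Polynomial.aeval (C v0 + C c * X 1) h,
            C v0 + C c * X 1] with hAdef
        have hAf : ∀ n : ℕ, eval ![(a:k)^n, (n:k)] (A f) = 0 := by
          intro n
          rw [hAdef]
          show eval ![(a:k)^n, (n:k)] (MvPolynomial.aeval _ f) = 0
          rw [eval_mv_aeval]
          have hfun : (fun i => eval ![(a:k)^n, (n:k)]
              ((![C u0 * X 0 + Polynomial.aeval (C v0 + C c * X 1) h,
                C v0 + C c * X 1] : Fin 2 → MvPolynomial (Fin 2) k) i))
              = ![(a:k)^n * u0 + Polynomial.eval (v0 + n*c) h, v0 + n*c] := by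
            funext i
            fin_cases i
            · show eval ![(a:k)^n, (n:k)] (C u0 * X 0 + Polynomial.aeval (C v0 + C c * X 1) h)
                  = (a:k)^n * u0 + Polynomial.eval (v0 + (n:k)*c) h
              rw [map_add, map_mul, eval_C, eval_X, eval_pol_aeval]
              simp only [Matrix.cons_val_zero, Matrix.cons_val_one, Matrix.head_cons]
              rw [map_add, map_mul, eval_C, eval_C, eval_X]
              simp only [Matrix.cons_val_zero, Matrix.cons_val_one, Matrix.head_cons]
              rw [mul_comm c ((n:ℕ):k)]
              ring
            · show eval ![(a:k)^n, (n:k)] (C v0 + C c * X 1) = v0 + (n:k)*c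
              rw [map_add, map_mul, eval_C, eval_C, eval_X]
              simp only [Matrix.cons_val_one, Matrix.head_cons, Matrix.cons_val_zero]
              ring
          rw [hfun]
          have hmem := horbit p hp n
          rw [hI] at hmem
          exact hmem f hf
        have hA0 : A f = 0 := orbitClosure (a:k) ha0 ha' (A f) hAf
        set B : MvPolynomial (Fin 2) k →ₐ[k] MvPolynomial (Fin 2) k :=
          MvPolynomial.aeval ![C u0⁻¹ * (X 0 - Polynomial.aeval (X 1) h),
            C c⁻¹ * (X 1 - C v0)] with hBdef
        have hBC : ∀ z : MvPolynomial (Fin 2) k, C v0 + C c * (C c⁻¹ * (z - C v0)) = z := by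
          intro z
          rw [← mul_assoc, ← map_mul, mul_inv_cancel₀ hc, map_one, one_mul]
          ring
        have hBA : B.comp A = AlgHom.id k _ := by
          apply MvPolynomial.algHom_ext
          intro i
          fin_cases i
          · show B (A (X 0)) = X 0
            have hA0' : A (X 0) = C u0 * X 0 + Polynomial.aeval (C v0 + C c * X 1) h := by
              rw [hAdef]; simp
            rw [hA0', map_add, map_mul]
            have hBX0 : B (X 0) = C u0⁻¹ * (X 0 - Polynomial.aeval (X 1) h) := by
              rw [hBdef]; simp
            have hBX1 : B (X 1) = C c⁻¹ * (X 1 - C v0) := by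
              rw [hBdef]; simp
            have hBC0 : B (C u0) = C u0 := by
              rw [hBdef]; simp [MvPolynomial.aeval_C]
            have hBh : B (Polynomial.aeval (C v0 + C c * X 1 : MvPolynomial (Fin 2) k) h)
                = Polynomial.aeval (X 1 : MvPolynomial (Fin 2) k) h := by
              rw [← Polynomial.aeval_algHom_apply]
              congr 1
              rw [map_add, map_mul]
              have hBCv : B (C v0) = C v0 := by rw [hBdef]; simp [MvPolynomial.aeval_C]
              have hBCc : B (C c) = C c := by rw [hBdef]; simp [MvPolynomial.aeval_C]
              rw [hBCv, hBCc, hBX1, hBC]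
            rw [hBX0, hBC0, hBh, ← mul_assoc, ← map_mul, mul_inv_cancel₀ ?_, map_one, one_mul]
            · ring
            · exact hu0
          · show B (A (X 1)) = X 1
            have hA1' : A (X 1) = C v0 + C c * X 1 := by
              rw [hAdef]; simp
            have hBX1 : B (X 1) = C c⁻¹ * (X 1 - C v0) := by
              rw [hBdef]; simp
            have hBCv : B (C v0) = C v0 := by rw [hBdef]; simp [MvPolynomial.aeval_C]
            have hBCc : B (C c) = C c := by rw [hBdef]; simp [MvPolynomial.aeval_C]
            rw [hA1', map_add, map_mul, hBCv, hBCc, hBX1, hBC]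
        have := congrArg (fun (F : MvPolynomial (Fin 2) k →ₐ[k] MvPolynomial (Fin 2) k) => F f) hBA
        simp only [AlgHom.coe_comp, Function.comp_apply, AlgHom.id_apply] at this
        rw [← this, hA0, map_zero]
      apply Set.eq_univ_of_forall
      intro q
      rw [hI]
      intro f hf
      rw [hzero f hf, map_zero]
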